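/- Let V be a finite set of points in the Euclidean plane ℝ² and let T be a minimum spanning tree of V. Then every vertex of T has at most six neighbours in T. -/

import Mathlib

open scoped BigOperators

noncomputable section

/-- The Euclidean plane. -/
abbrev Pt : Type := EuclideanSpace ℝ (Fin 2)

/-- The length of an edge (an unordered pair of points): the Euclidean
distance between its endpoints. -/
def edgeLen : Sym2 Pt → ℝ :=
  Sym2.lift ⟨fun a b => dist a b, fun a b => dist_comm a b⟩

/-- The total length of a graph on the plane: the sum of the Euclidean
lengths of its edges. -/
def glength (G : SimpleGraph Pt) : ℝ := ∑ᶠ e ∈ G.edgeSet, edgeLen e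

/-- `G` is a spanning tree of the point set `V`: all its edges join points of
`V`, it is acyclic, and all points of `V` are pairwise connected in `G`. -/
def IsSpanningTreeOn (V : Set Pt) (G : SimpleGraph Pt) : Prop :=
  (∀ ⦃x y : Pt⦄, G.Adj x y → x ∈ V ∧ y ∈ V) ∧ G.IsAcyclic ∧
    ∀ x ∈ V, ∀ y ∈ V, G.Reachable x y

/-- `G` is a minimum spanning tree of the point set `V`. -/
def IsMSTOn (V : Set Pt) (G : SimpleGraph Pt) : Prop :=
  IsSpanningTreeOn V G ∧
    ∀ H : SimpleGraph Pt, IsSpanningTreeOn V H → glength G ≤ glength H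

/-! ### Geometry auxiliary lemmas -/

open Real

/-- complex number for the vector from v to w -/
def cxv (v w : Pt) : ℂ := Complex.mk ((w - v) 0) ((w - v) 1)

lemma abs_cxv (v w : Pt) : ‖cxv v w‖ = dist w v := by
  rw [Complex.norm_def, Complex.normSq_mk, dist_eq_norm, EuclideanSpace.norm_eq]
  congr 1
  rw [Fin.sum_univ_two]
  simp [cxv, sq_abs, sq]

lemma cxv_ne_zero (v w : Pt) (h : w ≠ v) : cxv v w ≠ 0 := by
  intro h0
  apply h
  have := abs_cxv v w
  rw [h0] at this
  simp at this
  exact this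

lemma inner_eq (v w1 w2 : Pt) (h1 : w1 ≠ v) (h2 : w2 ≠ v) :
    (inner ℝ (w1 - v) (w2 - v) : ℝ) =
      dist w1 v * dist w2 v * Real.cos (Complex.arg (cxv v w1) - Complex.arg (cxv v w2)) := by
  have z1 := cxv_ne_zero v w1 h1
  have z2 := cxv_ne_zero v w2 h2
  have c1 := Complex.cos_arg z1
  have c2 := Complex.cos_arg z2
  have s1 := Complex.sin_arg (cxv v w1)
  have s2 := Complex.sin_arg (cxv v w2)
  have a1 := abs_cxv v w1
  have a2 := abs_cxv v w2
  have d1 : (0:ℝ) < dist w1 v := dist_pos.mpr h1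
  have d2 : (0:ℝ) < dist w2 v := dist_pos.mpr h2
  rw [PiLp.inner_apply, Fin.sum_univ_two]
  have e1 : (w1 - v) 0 = dist w1 v * Real.cos (Complex.arg (cxv v w1)) := by
    rw [c1, a1]; field_simp [cxv]; rfl
  have e1' : (w1 - v) 1 = dist w1 v * Real.sin (Complex.arg (cxv v w1)) := by
    rw [s1, a1]; field_simp [cxv]; rfl
  have e2 : (w2 - v) 0 = dist w2 v * Real.cos (Complex.arg (cxv v w2)) := by
    rw [c2, a2]; field_simp [cxv]; rfl
  have e2' : (w2 - v) 1 = dist w2 v * Real.sin (Complex.arg (cxv v w2)) := by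
    rw [s2, a2]; field_simp [cxv]; rfl
  simp only [RCLike.inner_apply, starRingEnd_apply, star_trivial]
  rw [e1, e1', e2, e2', Real.cos_sub]
  ring

lemma dist_sq_lt (v w1 w2 : Pt) (h1 : w1 ≠ v) (h2 : w2 ≠ v)
    (hcos : 1/2 < Real.cos (Complex.arg (cxv v w1) - Complex.arg (cxv v w2)))
    (hle : dist w1 v ≤ dist w2 v) : dist w1 w2 < dist v w2 := by
  have d1 : (0:ℝ) < dist w1 v := dist_pos.mpr h1
  have d2 : (0:ℝ) < dist w2 v := dist_pos.mpr h2
  have key : (inner ℝ (w1 - v) (w2 - v) : ℝ) > dist w1 v * dist w2 v / 2 := by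
    rw [inner_eq v w1 w2 h1 h2]
    have : dist w1 v * dist w2 v > 0 := by positivity
    nlinarith
  have hd : dist w1 w2 ^ 2 < dist v w2 ^ 2 := by
    have hn : dist w1 w2 = ‖(w1 - v) - (w2 - v)‖ := by
      rw [dist_eq_norm]; congr 1; abel
    rw [hn, norm_sub_sq_real]
    have n1 : ‖w1 - v‖ = dist w1 v := (dist_eq_norm w1 v).symm
    have n2 : ‖w2 - v‖ = dist w2 v := (dist_eq_norm w2 v).symm
    have n3 : dist v w2 = dist w2 v := dist_comm v w2
    rw [n1, n2, n3]
    nlinarith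
  have : dist v w2 = dist w2 v := dist_comm v w2
  nlinarith [dist_nonneg (x := w1) (y := w2), dist_nonneg (x := v) (y := w2)]

/-! ### Angle bucket lemmas -/

def argPos (z : ℂ) : ℝ := Complex.arg z + (if Complex.arg z < 0 then 2*π else 0)

lemma argPos_nonneg (z : ℂ) : 0 ≤ argPos z := by
  unfold argPos
  split_ifs with h
  · nlinarith [Complex.neg_pi_lt_arg z, Real.pi_pos]
  · linarith [not_lt.mp h]

lemma argPos_lt (z : ℂ) : argPos z < 2*π := by
  unfold argPos
  split_ifs with h
  · linarith
  · linarith [Complex.arg_le_pi z, Real.pi_pos]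

lemma cos_argPos_sub (z w : ℂ) :
    Real.cos (argPos z - argPos w) = Real.cos (Complex.arg z - Complex.arg w) := by
  unfold argPos
  split_ifs with h1 h2 h2
  · ring_nf
  · rw [show Complex.arg z + 2*π - (Complex.arg w + 0) = (Complex.arg z - Complex.arg w) + 2*π by ring,
      Real.cos_add_two_pi]
  · rw [show Complex.arg z + 0 - (Complex.arg w + 2*π) = (Complex.arg z - Complex.arg w) - 2*π by ring,
      Real.cos_sub_two_pi]
  · ring_nf

lemma cos_gt_of_bucket_eq {θ1 θ2 : ℝ} (h1 : 0 ≤ θ1) (h2 : 0 ≤ θ2)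
    (heq : ⌊θ1 * 3 / π⌋ = ⌊θ2 * 3 / π⌋) : 1/2 < Real.cos (θ1 - θ2) := by
  have hpi := Real.pi_pos
  have f1 := Int.floor_le (θ1 * 3 / π)
  have f2 := Int.floor_le (θ2 * 3 / π)
  have g1 := Int.lt_floor_add_one (θ1 * 3 / π)
  have g2 := Int.lt_floor_add_one (θ2 * 3 / π)
  rw [heq] at f1 g1
  have habs : |θ1 - θ2| < π/3 := by
    rw [abs_lt]
    constructor
    · have h : θ2 * 3 / π - θ1 * 3 / π < 1 := by linarith
      rw [div_sub_div_same] at h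
      have := (div_lt_one hpi).mp h
      nlinarith
    · have h : θ1 * 3 / π - θ2 * 3 / π < 1 := by linarith
      rw [div_sub_div_same] at h
      have := (div_lt_one hpi).mp h
      nlinarith
  have h3 : Real.cos (π/3) < Real.cos |θ1 - θ2| := by
    apply Real.cos_lt_cos_of_nonneg_of_le_pi (abs_nonneg _) (by linarith) habs
  rw [Real.cos_abs] at h3
  rw [Real.cos_pi_div_three] at h3
  linarith

/-! ### Graph auxiliary lemmas -/

open SimpleGraph

lemma reach_lift {α : Type*} {G H : SimpleGraph α} (h : ∀ a b : α, G.Adj a b → H.Reachable a b)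
    {x y : α} (hr : G.Reachable x y) : H.Reachable x y := by
  obtain ⟨p⟩ := hr
  induction p with
  | nil => exact Reachable.refl _
  | cons ha _ ih => exact (h _ _ ha).trans ih

lemma swap_false (V : Finset Pt) (T : SimpleGraph Pt) (hT : IsMSTOn ↑V T)
    (v w1 w2 : Pt) (h1 : T.Adj v w1) (h2 : T.Adj v w2) (hne : w1 ≠ w2)
    (hlt : dist w1 w2 < dist v w2) : False := by
  classical
  obtain ⟨⟨hTV, hTacyc, hTreach⟩, hTmin⟩ := hT
  have hvw1 : v ≠ w1 := h1.ne
  have hvw2 : v ≠ w2 := h2.ne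
  -- f := s(w1,w2) is not an edge of T
  have hfT : s(w1, w2) ∉ T.edgeSet := by
    intro hmem
    have hadj : T.Adj w1 w2 := hmem
    have hq : (Walk.cons h1.symm (Walk.cons h2 Walk.nil) : T.Walk w1 w2).IsPath := by
      simp [Walk.isPath_def, hvw2, hne, hvw1.symm, Ne.symm hvw1]
    have := isAcyclic_iff_path_unique.mp hTacyc (SimpleGraph.Path.singleton hadj) ⟨_, hq⟩
    have hlen := congrArg (fun p : T.Path w1 w2 => p.1.length) this
    simp [SimpleGraph.Path.singleton] at hlen
  -- e := s(v,w2) is an edge of T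
  have heT : s(v, w2) ∈ T.edgeSet := h2
  have hef : s(v, w2) ≠ s(w1, w2) := by
    intro h
    exact hvw1 (Sym2.congr_left.mp h)
  -- T has finitely many edges
  have hTfin : T.edgeSet.Finite := by
    apply Set.Finite.subset
      (Set.Finite.image (fun p : Pt × Pt => s(p.1, p.2)) (V.finite_toSet.prod V.finite_toSet))
    intro e' he'
    induction e' using Sym2.ind with
    | _ a b =>
      have hab : T.Adj a b := he'
      exact ⟨(a, b), Set.mk_mem_prod (hTV hab).1 (hTV hab).2, rfl⟩
  -- the swapped graph
  set H : SimpleGraph Pt := fromEdgeSet (insert s(w1, w2) (T.edgeSet \ {s(v, w2)})) with hHdef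
  have hHe : H.edgeSet = insert s(w1, w2) (T.edgeSet \ {s(v, w2)}) := by
    rw [hHdef, edgeSet_fromEdgeSet]
    ext x
    simp only [Set.mem_diff, Set.mem_setOf_eq]
    constructor
    · rintro ⟨hx, -⟩; exact hx
    · intro hx
      refine ⟨hx, ?_⟩
      rcases hx with rfl | ⟨hmem, -⟩
      · rw [Sym2.mem_diagSet, Sym2.mk_isDiag_iff]; exact hne
      · exact T.not_isDiag_of_mem_edgeSet hmem
  have hHadj : ∀ a b : Pt, H.Adj a b ↔
      (s(a, b) ∈ insert s(w1, w2) (T.edgeSet \ {s(v, w2)}) ∧ a ≠ b) := by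
    intro a b; rw [hHdef]; exact fromEdgeSet_adj _
  -- key adjacencies in H
  have hHvw1 : H.Adj v w1 := by
    rw [hHadj]
    refine ⟨Or.inr ⟨h1, ?_⟩, hvw1⟩
    simp only [Set.mem_singleton_iff]
    intro h
    exact hne (Sym2.congr_right.mp h)
  have hHw12 : H.Adj w1 w2 := by
    rw [hHadj]
    exact ⟨Or.inl rfl, hne⟩
  -- every T-adjacency gives H-reachability
  have hreach : ∀ a b : Pt, T.Adj a b → H.Reachable a b := by
    intro a b hab
    by_cases hcase : s(a, b) = s(v, w2)
    · rw [Sym2.eq_iff] at hcase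
      rcases hcase with ⟨rfl, rfl⟩ | ⟨rfl, rfl⟩
      · exact hHvw1.reachable.trans hHw12.reachable
      · exact (hHvw1.reachable.trans hHw12.reachable).symm
    · refine Adj.reachable ?_
      rw [hHadj]
      exact ⟨Or.inr ⟨hab, hcase⟩, hab.ne⟩
  -- vertices of H lie in V
  have hw1V : w1 ∈ (V : Set Pt) := (hTV h1).2
  have hw2V : w2 ∈ (V : Set Pt) := (hTV h2).2
  have hHV : ∀ ⦃x y : Pt⦄, H.Adj x y → x ∈ (V : Set Pt) ∧ y ∈ (V : Set Pt) := by
    intro x y hxy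
    rw [hHadj] at hxy
    obtain ⟨hm, hxyne⟩ := hxy
    rcases hm with hm | ⟨hm, -⟩
    · rw [Sym2.eq_iff] at hm
      rcases hm with ⟨rfl, rfl⟩ | ⟨rfl, rfl⟩
      · exact ⟨hw1V, hw2V⟩
      · exact ⟨hw2V, hw1V⟩
    · exact hTV hm
  -- H is acyclic
  have hbridge : ¬(T \ fromEdgeSet {s(v, w2)}).Reachable v w2 :=
    (isBridge_iff.mp ((isAcyclic_iff_forall_adj_isBridge.mp hTacyc) h2))
  have hG2le : fromEdgeSet (T.edgeSet \ {s(v, w2)}) ≤ T \ fromEdgeSet {s(v, w2)} := by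
    intro a b hab
    obtain ⟨⟨hm, hnev⟩, habne⟩ := (fromEdgeSet_adj _).mp hab
    refine ⟨hm, ?_⟩
    rw [fromEdgeSet_adj _]
    rintro ⟨hm2, -⟩
    exact hnev hm2
  have hG2vw1 : (fromEdgeSet (T.edgeSet \ {s(v, w2)})).Adj v w1 := by
    rw [fromEdgeSet_adj _]
    refine ⟨⟨h1, ?_⟩, hvw1⟩
    simp only [Set.mem_singleton_iff]
    intro h
    exact hne (Sym2.congr_right.mp h)
  have hG2 : ¬(fromEdgeSet (T.edgeSet \ {s(v, w2)})).Reachable w1 w2 := by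
    intro hr
    exact hbridge ((hG2vw1.reachable.trans hr).mono hG2le)
  have hacyc : H.IsAcyclic := by
    intro a c hc
    by_cases hfc : s(w1, w2) ∈ c.edges
    · have hbr : H.IsBridge s(w1, w2) := by
        rw [isBridge_iff]
        refine fun hr => hG2 (hr.mono ?_)
        intro x y hxy
        obtain ⟨hx1, hx2⟩ := hxy
        rw [hHadj] at hx1
        obtain ⟨hm, hxyne⟩ := hx1
        rw [fromEdgeSet_adj _] at hx2
        rcases hm with hm | hm
        · exact absurd ⟨hm, hxyne⟩ hx2
        · exact (fromEdgeSet_adj _).mpr ⟨hm, hxyne⟩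
      exact (isBridge_iff_adj_and_forall_cycle_notMem hHw12).mp hbr c hc hfc
    · have hsub : ∀ e' ∈ c.edges, e' ∈ T.edgeSet := by
        intro e' he'
        have hmem := c.edges_subset_edgeSet he'
        rw [hHe] at hmem
        rcases hmem with rfl | ⟨hm, -⟩
        · exact absurd he' hfc
        · exact hm
      exact hTacyc (c.transfer T hsub) (hc.transfer hsub)
  -- H is a spanning tree on V
  have hHst : IsSpanningTreeOn (↑V) H :=
    ⟨hHV, hacyc, fun x hx y hy => reach_lift hreach (hTreach x hx y hy)⟩
  -- length comparison
  have hA : glength T = ∑ x ∈ hTfin.toFinset, edgeLen x := by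
    rw [glength, ← finsum_mem_coe_finset, Set.Finite.coe_toFinset]
  have heA : s(v, w2) ∈ hTfin.toFinset := hTfin.mem_toFinset.mpr heT
  have hfA : s(w1, w2) ∉ hTfin.toFinset := fun h => hfT (hTfin.mem_toFinset.mp h)
  have hHfin : H.edgeSet = ↑(insert s(w1, w2) (hTfin.toFinset.erase s(v, w2))) := by
    rw [hHe, Finset.coe_insert, Finset.coe_erase, Set.Finite.coe_toFinset]
  have hB : glength H = ∑ x ∈ insert s(w1, w2) (hTfin.toFinset.erase s(v, w2)), edgeLen x := by
    rw [glength, hHfin, finsum_mem_coe_finset]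
  have hsum : glength H = edgeLen s(w1, w2) + (glength T - edgeLen s(v, w2)) := by
    rw [hB, hA, Finset.sum_insert (fun h => hfA (Finset.mem_of_mem_erase h)),
      Finset.sum_erase_eq_sub heA]
  have hlen1 : edgeLen s(w1, w2) = dist w1 w2 := rfl
  have hlen2 : edgeLen s(v, w2) = dist v w2 := rfl
  have := hTmin H hHst
  rw [hsum, hlen1, hlen2] at this
  linarith

theorem stmt3 (V : Finset Pt) (T : SimpleGraph Pt) (hT : IsMSTOn ↑V T) (v : Pt) :
    (T.neighborSet v).ncard ≤ 6 := by
  classical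
  by_contra hcon
  push_neg at hcon
  have hsub : T.neighborSet v ⊆ ↑V := fun w hw => (hT.1.1 hw).2
  have hfin : (T.neighborSet v).Finite := V.finite_toSet.subset hsub
  have hNcard : 6 < hfin.toFinset.card := by
    rwa [Set.ncard_eq_toFinset_card _ hfin] at hcon
  have hpi := Real.pi_pos
  -- bucket map
  have hmaps : ∀ w ∈ hfin.toFinset, (⌊argPos (cxv v w) * 3 / π⌋).toNat ∈ Finset.range 6 := by
    intro w _
    rw [Finset.mem_range]
    have h0 := argPos_nonneg (cxv v w)
    have h2 := argPos_lt (cxv v w)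
    have hfl : ⌊argPos (cxv v w) * 3 / π⌋ < 6 := by
      rw [Int.floor_lt]
      push_cast
      rw [div_lt_iff₀ hpi]
      nlinarith
    omega
  obtain ⟨w1, hw1, w2, hw2, hne, heq⟩ :=
    Finset.exists_ne_map_eq_of_card_lt_of_maps_to (by rw [Finset.card_range]; omega) hmaps
  have hw1n : T.Adj v w1 := hfin.mem_toFinset.mp hw1
  have hw2n : T.Adj v w2 := hfin.mem_toFinset.mp hw2
  have hnn : ∀ w : Pt, 0 ≤ ⌊argPos (cxv v w) * 3 / π⌋ := by
    intro w
    apply Int.floor_nonneg.mpr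
    have h0 := argPos_nonneg (cxv v w)
    positivity
  have hfl : ⌊argPos (cxv v w1) * 3 / π⌋ = ⌊argPos (cxv v w2) * 3 / π⌋ := by
    have := hnn w1; have := hnn w2; omega
  have hcos : 1/2 < Real.cos (Complex.arg (cxv v w1) - Complex.arg (cxv v w2)) := by
    rw [← cos_argPos_sub]
    exact cos_gt_of_bucket_eq (argPos_nonneg _) (argPos_nonneg _) hfl
  have hcos' : 1/2 < Real.cos (Complex.arg (cxv v w2) - Complex.arg (cxv v w1)) := by
    rw [show Complex.arg (cxv v w2) - Complex.arg (cxv v w1)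
        = -(Complex.arg (cxv v w1) - Complex.arg (cxv v w2)) by ring, Real.cos_neg]
    exact hcos
  rcases le_total (dist w1 v) (dist w2 v) with hle | hle
  · exact swap_false V T hT v w1 w2 hw1n hw2n hne
      (dist_sq_lt v w1 w2 hw1n.ne' hw2n.ne' hcos hle)
  · exact swap_false V T hT v w2 w1 hw2n hw1n hne.symm
      (dist_sq_lt v w2 w1 hw2n.ne' hw1n.ne' hcos' hle)

end
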